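/- Let g = 2 and let B be the positive definite symmetric bilinear form on ℝ² with matrix r₁·[[1,0],[0,1]] + r₂·[[0,0],[0,1]] + r₃·[[1,1],[1,1]], where r₁, r₂, r₃ > 0. Then the 2-dimensional Delaunay cells of B are exactly the ℤ²-translates of the two triangles σ₃ = conv{0, s₁, s₂} and σ₄ = conv{s₁, s₂, s₁+s₂}. -/

import Mathlib

open Matrix Set

noncomputable section

/-- The standard lattice `ℤ^g` sitting inside `ℝ^g`. -/
def latticePts (g : ℕ) : Set (Fin g → ℝ) :=
  Set.range (fun a : Fin g → ℤ => fun i => (a i : ℝ))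

/-- `σ` is a (closed) Delaunay cell of the bilinear form `B`: there is an `α ∈ ℝ^g`
such that `σ` is the convex hull of the lattice points nearest to `α`
(with respect to the distance defined by `B`). -/
def IsDelaunayCell {g : ℕ} (B : (Fin g → ℝ) → (Fin g → ℝ) → ℝ)
    (σ : Set (Fin g → ℝ)) : Prop :=
  ∃ α : Fin g → ℝ, σ = convexHull ℝ
    {a | a ∈ latticePts g ∧ ∀ b ∈ latticePts g, B (a - α) (a - α) ≤ B (b - α) (b - α)}

/-- `C(0,S)`: the cone generated by `S` over the nonnegative reals. -/
def cone0 {g : ℕ} (S : Set (Fin g → ℝ)) : Set (Fin g → ℝ) :=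
  {x | ∃ r : ℝ, 0 ≤ r ∧ ∃ y ∈ convexHull ℝ S, x = r • y}

/-- `Semi(0, S ∩ ℤ^g)`: the additive submonoid generated by the lattice points of `S`. -/
def semi0 {g : ℕ} (S : Set (Fin g → ℝ)) : Set (Fin g → ℝ) :=
  (AddSubmonoid.closure (S ∩ latticePts g) : AddSubmonoid (Fin g → ℝ))

/-- The standard basis vector `s_i` of `ℝ^g`. -/
def stdV (g : ℕ) (i : Fin g) : Fin g → ℝ := Pi.single i 1

/-- Translation of a subset of `ℝ^g` by a lattice vector `v ∈ ℤ^g`. -/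
def zTrans {g : ℕ} (v : Fin g → ℤ) (S : Set (Fin g → ℝ)) : Set (Fin g → ℝ) :=
  (fun x => (fun i => (v i : ℝ)) + x) '' S

def cz (a : Fin 2 → ℤ) : Fin 2 → ℝ := fun i => (a i : ℝ)

lemma latmem (p : Fin 2 → ℤ) : cz p ∈ latticePts 2 := ⟨p, rfl⟩

def Qr (r₁ r₂ r₃ : ℝ) (x : Fin 2 → ℝ) : ℝ :=
  r₁ * ((x 0)^2 + (x 1)^2) + r₂ * (x 1)^2 + r₃ * (x 0 + x 1)^2

lemma Bform (r₁ r₂ r₃ : ℝ) (x : Fin 2 → ℝ) :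
    x ⬝ᵥ ((r₁ • !![(1:ℝ), 0; 0, 1] + r₂ • !![(0:ℝ), 0; 0, 1]
            + r₃ • !![(1:ℝ), 1; 1, 1]).mulVec x) = Qr r₁ r₂ r₃ x := by
  simp [Qr, Matrix.mulVec, dotProduct, Fin.sum_univ_two, Matrix.vecHead, Matrix.vecTail]
  ring

def mins (r₁ r₂ r₃ : ℝ) (α : Fin 2 → ℝ) : Set (Fin 2 → ℝ) :=
  {a | a ∈ latticePts 2 ∧ ∀ b ∈ latticePts 2,
    Qr r₁ r₂ r₃ (a - α) ≤ Qr r₁ r₂ r₃ (b - α)}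

lemma int_nn (x : ℤ) : 0 ≤ x * (x - 1) := by
  rcases le_or_gt x 0 with h | h
  · have := mul_nonneg (neg_nonneg.2 h) (by omega : (0:ℤ) ≤ 1 - x)
    nlinarith
  · exact mul_nonneg (by omega) (by omega)

lemma zv_eq (v w : Fin 2 → ℤ) (h0 : v 0 = w 0) (h1 : v 1 = w 1) : v = w := by
  funext i
  fin_cases i
  · exact h0
  · exact h1

lemma cz_eq (v : Fin 2 → ℤ) (x : Fin 2 → ℝ) (h0 : (v 0 : ℝ) = x 0)
    (h1 : (v 1 : ℝ) = x 1) : cz v = x := by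
  funext i
  fin_cases i
  · exact h0
  · exact h1

section params
variable (r₁ r₂ r₃ : ℝ)

def Δ : ℝ := r₁^2 + r₁*r₂ + 2*r₁*r₃ + r₂*r₃

def α3 (v : Fin 2 → ℤ) : Fin 2 → ℝ :=
  cz v + ![r₁*(r₁+r₂+r₃)/(2*Δ r₁ r₂ r₃), (r₁+r₃)*(r₁+r₂)/(2*Δ r₁ r₂ r₃)]

def α4 (v : Fin 2 → ℤ) : Fin 2 → ℝ :=
  cz v + ![r₁*(r₁+r₂+r₃)/(2*Δ r₁ r₂ r₃) + r₃*(r₁+r₂)/(Δ r₁ r₂ r₃),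
          (r₁+r₃)*(r₁+r₂)/(2*Δ r₁ r₂ r₃) + r₃*r₁/(Δ r₁ r₂ r₃)]

def F3 (x y : ℤ) : ℝ :=
  r₁ * ((x*(x-1) + y*(y-1) : ℤ) : ℝ) + r₂ * ((y*(y-1) : ℤ) : ℝ)
    + r₃ * (((x+y)*(x+y-1) : ℤ) : ℝ)

def F4 (x y : ℤ) : ℝ :=
  r₁ * ((x*(x-1) + y*(y-1) : ℤ) : ℝ) + r₂ * ((y*(y-1) : ℤ) : ℝ)
    + r₃ * (((x+y-1)*(x+y-2) : ℤ) : ℝ)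

variable (h₁ : 0 < r₁) (h₂ : 0 < r₂) (h₃ : 0 < r₃)
include h₁ h₂ h₃

lemma Δpos : 0 < Δ r₁ r₂ r₃ := by unfold Δ; nlinarith

lemma F3_nonneg (x y : ℤ) : 0 ≤ F3 r₁ r₂ r₃ x y := by
  unfold F3
  have a1 := int_nn x; have a2 := int_nn y; have a3 := int_nn (x+y)
  have c1 : (0:ℝ) ≤ ((x*(x-1) + y*(y-1) : ℤ) : ℝ) := by exact_mod_cast by omega
  have c2 : (0:ℝ) ≤ ((y*(y-1) : ℤ) : ℝ) := by exact_mod_cast a2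
  have c3 : (0:ℝ) ≤ (((x+y)*(x+y-1) : ℤ) : ℝ) := by exact_mod_cast a3
  have := mul_nonneg h₁.le c1
  have := mul_nonneg h₂.le c2
  have := mul_nonneg h₃.le c3
  linarith

lemma F4_nonneg (x y : ℤ) : 0 ≤ F4 r₁ r₂ r₃ x y := by
  unfold F4
  have a1 := int_nn x; have a2 := int_nn y
  have a3 : 0 ≤ (x+y-1)*(x+y-2) := by
    have h := int_nn (x+y-1); nlinarith
  have c1 : (0:ℝ) ≤ ((x*(x-1) + y*(y-1) : ℤ) : ℝ) := by exact_mod_cast by omega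
  have c2 : (0:ℝ) ≤ ((y*(y-1) : ℤ) : ℝ) := by exact_mod_cast a2
  have c3 : (0:ℝ) ≤ (((x+y-1)*(x+y-2) : ℤ) : ℝ) := by exact_mod_cast a3
  have := mul_nonneg h₁.le c1
  have := mul_nonneg h₂.le c2
  have := mul_nonneg h₃.le c3
  linarith

lemma F3_zero (x y : ℤ) (h : F3 r₁ r₂ r₃ x y = 0) :
    (x = 0 ∧ y = 0) ∨ (x = 1 ∧ y = 0) ∨ (x = 0 ∧ y = 1) := by
  unfold F3 at h
  have a1 := int_nn x; have a2 := int_nn y; have a3 := int_nn (x+y)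
  have c1 : (0:ℝ) ≤ ((x*(x-1) + y*(y-1) : ℤ) : ℝ) := by exact_mod_cast by omega
  have c2 : (0:ℝ) ≤ ((y*(y-1) : ℤ) : ℝ) := by exact_mod_cast a2
  have c3 : (0:ℝ) ≤ (((x+y)*(x+y-1) : ℤ) : ℝ) := by exact_mod_cast a3
  have z1 : ((x*(x-1) + y*(y-1) : ℤ) : ℝ) = 0 := by
    by_contra hne
    have : (0:ℝ) < r₁ * ((x*(x-1) + y*(y-1) : ℤ) : ℝ) :=
      mul_pos h₁ (c1.lt_of_ne (Ne.symm hne))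
    nlinarith [mul_nonneg h₂.le c2, mul_nonneg h₃.le c3]
  have z3 : (((x+y)*(x+y-1) : ℤ) : ℝ) = 0 := by
    by_contra hne
    have : (0:ℝ) < r₃ * (((x+y)*(x+y-1) : ℤ) : ℝ) :=
      mul_pos h₃ (c3.lt_of_ne (Ne.symm hne))
    nlinarith [mul_nonneg h₂.le c2, mul_nonneg h₁.le c1]
  have z1' : x*(x-1) + y*(y-1) = 0 := by exact_mod_cast z1
  have z3' : (x+y)*(x+y-1) = 0 := by exact_mod_cast z3
  have hx : x*(x-1) = 0 := by linarith [int_nn x, int_nn y]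
  have hy : y*(y-1) = 0 := by linarith [int_nn x, int_nn y]
  rcases mul_eq_zero.1 hx with h | h <;> rcases mul_eq_zero.1 hy with h' | h' <;>
    rcases mul_eq_zero.1 z3' with h'' | h'' <;> omega

lemma F4_zero (x y : ℤ) (h : F4 r₁ r₂ r₃ x y = 0) :
    (x = 1 ∧ y = 0) ∨ (x = 0 ∧ y = 1) ∨ (x = 1 ∧ y = 1) := by
  unfold F4 at h
  have a1 := int_nn x; have a2 := int_nn y
  have a3 : 0 ≤ (x+y-1)*(x+y-2) := by
    have h' := int_nn (x+y-1); nlinarith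
  have c1 : (0:ℝ) ≤ ((x*(x-1) + y*(y-1) : ℤ) : ℝ) := by exact_mod_cast by omega
  have c2 : (0:ℝ) ≤ ((y*(y-1) : ℤ) : ℝ) := by exact_mod_cast a2
  have c3 : (0:ℝ) ≤ (((x+y-1)*(x+y-2) : ℤ) : ℝ) := by exact_mod_cast a3
  have z1 : ((x*(x-1) + y*(y-1) : ℤ) : ℝ) = 0 := by
    by_contra hne
    have : (0:ℝ) < r₁ * ((x*(x-1) + y*(y-1) : ℤ) : ℝ) :=
      mul_pos h₁ (c1.lt_of_ne (Ne.symm hne))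
    nlinarith [mul_nonneg h₂.le c2, mul_nonneg h₃.le c3]
  have z3 : (((x+y-1)*(x+y-2) : ℤ) : ℝ) = 0 := by
    by_contra hne
    have : (0:ℝ) < r₃ * (((x+y-1)*(x+y-2) : ℤ) : ℝ) :=
      mul_pos h₃ (c3.lt_of_ne (Ne.symm hne))
    nlinarith [mul_nonneg h₂.le c2, mul_nonneg h₁.le c1]
  have z1' : x*(x-1) + y*(y-1) = 0 := by exact_mod_cast z1
  have z3' : (x+y-1)*(x+y-2) = 0 := by exact_mod_cast z3
  have hx : x*(x-1) = 0 := by linarith [int_nn x, int_nn y]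
  have hy : y*(y-1) = 0 := by linarith [int_nn x, int_nn y]
  rcases mul_eq_zero.1 hx with h | h <;> rcases mul_eq_zero.1 hy with h' | h' <;>
    rcases mul_eq_zero.1 z3' with h'' | h'' <;> omega

lemma id3 (v b : Fin 2 → ℤ) :
    Qr r₁ r₂ r₃ (cz b - α3 r₁ r₂ r₃ v)
      = Qr r₁ r₂ r₃ (cz v - α3 r₁ r₂ r₃ v) + F3 r₁ r₂ r₃ (b 0 - v 0) (b 1 - v 1) := by
  have hΔ : Δ r₁ r₂ r₃ ≠ 0 := (Δpos r₁ r₂ r₃ h₁ h₂ h₃).ne'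
  simp only [Qr, F3, α3, cz, Δ, Pi.sub_apply, Pi.add_apply, Matrix.cons_val_zero,
    Matrix.cons_val_one, Matrix.head_cons]
  push_cast
  field_simp
  ring

lemma id4 (v b : Fin 2 → ℤ) :
    Qr r₁ r₂ r₃ (cz b - α4 r₁ r₂ r₃ v)
      = Qr r₁ r₂ r₃ (cz (v + ![1,0]) - α4 r₁ r₂ r₃ v)
        + F4 r₁ r₂ r₃ (b 0 - v 0) (b 1 - v 1) := by
  have hΔ : Δ r₁ r₂ r₃ ≠ 0 := (Δpos r₁ r₂ r₃ h₁ h₂ h₃).ne'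
  simp only [Qr, F4, α4, cz, Δ, Pi.sub_apply, Pi.add_apply, Matrix.cons_val_zero,
    Matrix.cons_val_one, Matrix.head_cons]
  push_cast
  field_simp
  ring


lemma mins3 (v : Fin 2 → ℤ) :
    mins r₁ r₂ r₃ (α3 r₁ r₂ r₃ v)
      = {cz v, cz v + stdV 2 0, cz v + stdV 2 1} := by
  have key := id3 r₁ r₂ r₃ h₁ h₂ h₃ v
  have pt0 : (cz v + stdV 2 0) 0 = (v 0 : ℝ) + 1 := by simp [cz, stdV]
  have pt1 : (cz v + stdV 2 0) 1 = (v 1 : ℝ) := by simp [cz, stdV, Pi.single_apply]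
  have qt0 : (cz v + stdV 2 1) 0 = (v 0 : ℝ) := by simp [cz, stdV, Pi.single_apply]
  have qt1 : (cz v + stdV 2 1) 1 = (v 1 : ℝ) + 1 := by simp [cz, stdV]
  ext a
  constructor
  · rintro ⟨⟨p, hp⟩, hmin⟩
    have hpa : cz p = a := hp
    have h0 := hmin (cz v) (latmem v)
    rw [← hpa, key p, key v] at h0
    have hv0 : F3 r₁ r₂ r₃ (v 0 - v 0) (v 1 - v 1) = 0 := by simp [F3]
    rw [hv0] at h0
    have heq : F3 r₁ r₂ r₃ (p 0 - v 0) (p 1 - v 1) = 0 :=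
      le_antisymm (by linarith) (F3_nonneg r₁ r₂ r₃ h₁ h₂ h₃ _ _)
    rcases F3_zero r₁ r₂ r₃ h₁ h₂ h₃ _ _ heq with ⟨e0, e1⟩ | ⟨e0, e1⟩ | ⟨e0, e1⟩
    · left; rw [← hpa]
      refine cz_eq p (cz v) ?_ ?_
      · rw [(by omega : p 0 = v 0)]; rfl
      · rw [(by omega : p 1 = v 1)]; rfl
    · right; left; rw [← hpa]
      refine cz_eq p _ ?_ ?_
      · rw [(by omega : p 0 = v 0 + 1), pt0]; push_cast; ring
      · rw [(by omega : p 1 = v 1), pt1]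
    · right; right; rw [← hpa]
      refine cz_eq p _ ?_ ?_
      · rw [(by omega : p 0 = v 0), qt0]
      · rw [(by omega : p 1 = v 1 + 1), qt1]; push_cast; ring
  · intro ha
    have main : ∀ w : Fin 2 → ℤ, cz w = a →
        F3 r₁ r₂ r₃ (w 0 - v 0) (w 1 - v 1) = 0 → a ∈ mins r₁ r₂ r₃ (α3 r₁ r₂ r₃ v) := by
      rintro w rfl hF
      refine ⟨latmem w, ?_⟩
      rintro b ⟨q, hq⟩
      have hqb : cz q = b := hq
      rw [← hqb, key w, key q, hF]
      have := F3_nonneg r₁ r₂ r₃ h₁ h₂ h₃ (q 0 - v 0) (q 1 - v 1)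
      linarith
    rcases ha with rfl | rfl | rfl
    · exact main v rfl (by simp [F3])
    · refine main (v + ![1, 0]) (cz_eq _ _ ?_ ?_) ?_
      · show ((v 0 + ![1,0] 0 : ℤ) : ℝ) = _
        rw [pt0]; push_cast [Matrix.cons_val_zero]; ring
      · show ((v 1 + ![1,0] 1 : ℤ) : ℝ) = _
        rw [pt1]; push_cast [Matrix.cons_val_one, Matrix.head_cons]; ring
      · show F3 r₁ r₂ r₃ (v 0 + ![1,0] 0 - v 0) (v 1 + ![1,0] 1 - v 1) = 0
        simp [F3]
    · refine main (v + ![0, 1]) (cz_eq _ _ ?_ ?_) ?_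
      · show ((v 0 + ![0,1] 0 : ℤ) : ℝ) = _
        rw [qt0]; push_cast [Matrix.cons_val_zero]; ring
      · show ((v 1 + ![0,1] 1 : ℤ) : ℝ) = _
        rw [qt1]; push_cast [Matrix.cons_val_one, Matrix.head_cons]; ring
      · show F3 r₁ r₂ r₃ (v 0 + ![0,1] 0 - v 0) (v 1 + ![0,1] 1 - v 1) = 0
        simp [F3]

lemma mins4 (v : Fin 2 → ℤ) :
    mins r₁ r₂ r₃ (α4 r₁ r₂ r₃ v)
      = {cz v + stdV 2 0, cz v + stdV 2 1, cz v + (stdV 2 0 + stdV 2 1)} := by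
  have key := id4 r₁ r₂ r₃ h₁ h₂ h₃ v
  have pt0 : (cz v + stdV 2 0) 0 = (v 0 : ℝ) + 1 := by simp [cz, stdV]
  have pt1 : (cz v + stdV 2 0) 1 = (v 1 : ℝ) := by simp [cz, stdV, Pi.single_apply]
  have qt0 : (cz v + stdV 2 1) 0 = (v 0 : ℝ) := by simp [cz, stdV, Pi.single_apply]
  have qt1 : (cz v + stdV 2 1) 1 = (v 1 : ℝ) + 1 := by simp [cz, stdV]
  have rt0 : (cz v + (stdV 2 0 + stdV 2 1)) 0 = (v 0 : ℝ) + 1 := by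
    simp [cz, stdV, Pi.single_apply]
  have rt1 : (cz v + (stdV 2 0 + stdV 2 1)) 1 = (v 1 : ℝ) + 1 := by
    simp [cz, stdV, Pi.single_apply]
  ext a
  constructor
  · rintro ⟨⟨p, hp⟩, hmin⟩
    have hpa : cz p = a := hp
    have h0 := hmin (cz (v + ![1,0])) (latmem _)
    rw [← hpa, key p, key (v + ![1,0])] at h0
    have hv0 : F4 r₁ r₂ r₃ ((v + ![1,0] : Fin 2 → ℤ) 0 - v 0) ((v + ![1,0] : Fin 2 → ℤ) 1 - v 1) = 0 := by
      show F4 r₁ r₂ r₃ (v 0 + ![1,0] 0 - v 0) (v 1 + ![1,0] 1 - v 1) = 0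
      simp [F4]
    rw [hv0] at h0
    have heq : F4 r₁ r₂ r₃ (p 0 - v 0) (p 1 - v 1) = 0 :=
      le_antisymm (by linarith) (F4_nonneg r₁ r₂ r₃ h₁ h₂ h₃ _ _)
    rcases F4_zero r₁ r₂ r₃ h₁ h₂ h₃ _ _ heq with ⟨e0, e1⟩ | ⟨e0, e1⟩ | ⟨e0, e1⟩
    · left; rw [← hpa]
      refine cz_eq p _ ?_ ?_
      · rw [(by omega : p 0 = v 0 + 1), pt0]; push_cast; ring
      · rw [(by omega : p 1 = v 1), pt1]
    · right; left; rw [← hpa]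
      refine cz_eq p _ ?_ ?_
      · rw [(by omega : p 0 = v 0), qt0]
      · rw [(by omega : p 1 = v 1 + 1), qt1]; push_cast; ring
    · right; right; rw [← hpa]
      refine cz_eq p _ ?_ ?_
      · rw [(by omega : p 0 = v 0 + 1), rt0]; push_cast; ring
      · rw [(by omega : p 1 = v 1 + 1), rt1]; push_cast; ring
  · intro ha
    have main : ∀ w : Fin 2 → ℤ, cz w = a →
        F4 r₁ r₂ r₃ (w 0 - v 0) (w 1 - v 1) = 0 → a ∈ mins r₁ r₂ r₃ (α4 r₁ r₂ r₃ v) := by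
      rintro w rfl hF
      refine ⟨latmem w, ?_⟩
      rintro b ⟨q, hq⟩
      have hqb : cz q = b := hq
      rw [← hqb, key w, key q, hF]
      have := F4_nonneg r₁ r₂ r₃ h₁ h₂ h₃ (q 0 - v 0) (q 1 - v 1)
      linarith
    rcases ha with rfl | rfl | rfl
    · refine main (v + ![1, 0]) (cz_eq _ _ ?_ ?_) ?_
      · show ((v 0 + ![1,0] 0 : ℤ) : ℝ) = _
        rw [pt0]; push_cast [Matrix.cons_val_zero]; ring
      · show ((v 1 + ![1,0] 1 : ℤ) : ℝ) = _
        rw [pt1]; push_cast [Matrix.cons_val_one, Matrix.head_cons]; ring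
      · show F4 r₁ r₂ r₃ (v 0 + ![1,0] 0 - v 0) (v 1 + ![1,0] 1 - v 1) = 0
        simp [F4]
    · refine main (v + ![0, 1]) (cz_eq _ _ ?_ ?_) ?_
      · show ((v 0 + ![0,1] 0 : ℤ) : ℝ) = _
        rw [qt0]; push_cast [Matrix.cons_val_zero]; ring
      · show ((v 1 + ![0,1] 1 : ℤ) : ℝ) = _
        rw [qt1]; push_cast [Matrix.cons_val_one, Matrix.head_cons]; ring
      · show F4 r₁ r₂ r₃ (v 0 + ![0,1] 0 - v 0) (v 1 + ![0,1] 1 - v 1) = 0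
        simp [F4]
    · refine main (v + ![1, 1]) (cz_eq _ _ ?_ ?_) ?_
      · show ((v 0 + ![1,1] 0 : ℤ) : ℝ) = _
        rw [rt0]; push_cast [Matrix.cons_val_zero]; ring
      · show ((v 1 + ![1,1] 1 : ℤ) : ℝ) = _
        rw [rt1]; push_cast [Matrix.cons_val_one, Matrix.head_cons]; ring
      · show F4 r₁ r₂ r₃ (v 0 + ![1,1] 0 - v 0) (v 1 + ![1,1] 1 - v 1) = 0
        simp [F4]

lemma no_two_step (α : Fin 2 → ℝ) (a e : Fin 2 → ℤ) (t : ℤ) (ht : 2 ≤ t)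
    (hQ : 0 < Qr r₁ r₂ r₃ (cz e))
    (ha : cz a ∈ mins r₁ r₂ r₃ α) (ha' : cz (a + t • e) ∈ mins r₁ r₂ r₃ α) : False := by
  obtain ⟨-, hmin⟩ := ha
  obtain ⟨-, hmin'⟩ := ha'
  have heq : Qr r₁ r₂ r₃ (cz a - α) = Qr r₁ r₂ r₃ (cz (a + t • e) - α) :=
    le_antisymm (hmin _ (latmem _)) (hmin' _ (latmem _))
  have hmid := hmin (cz (a + e)) (latmem _)
  have key : (t:ℝ) * (Qr r₁ r₂ r₃ (cz (a + e) - α) - Qr r₁ r₂ r₃ (cz a - α))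
      = (Qr r₁ r₂ r₃ (cz (a + t • e) - α) - Qr r₁ r₂ r₃ (cz a - α))
        + Qr r₁ r₂ r₃ (cz e) * ((t:ℝ) - (t:ℝ)^2) := by
    simp only [Qr, cz, Pi.sub_apply, Pi.add_apply, Pi.smul_apply, smul_eq_mul]
    push_cast
    ring
  have h5 : (0:ℝ) < (t:ℝ) := by exact_mod_cast (by omega : (0:ℤ) < t)
  have h5' : (2:ℝ) ≤ (t:ℝ) := by exact_mod_cast ht
  have h6 : ((t:ℝ) - (t:ℝ)^2) < 0 := by nlinarith
  nlinarith [mul_pos hQ (by nlinarith : (0:ℝ) < (t:ℝ)^2 - (t:ℝ)),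
    mul_nonneg h5.le (by linarith : (0:ℝ) ≤ Qr r₁ r₂ r₃ (cz (a + e) - α) - Qr r₁ r₂ r₃ (cz a - α))]

lemma exch_xy (α : Fin 2 → ℝ) (a a' : Fin 2 → ℤ)
    (ha : cz a ∈ mins r₁ r₂ r₃ α) (ha' : cz a' ∈ mins r₁ r₂ r₃ α) :
    (a 0 - a' 0) * (a 1 - a' 1) ≤ 0 := by
  obtain ⟨-, hmin⟩ := ha
  obtain ⟨-, hmin'⟩ := ha'
  have hu := hmin (cz ![a 0, a' 1]) (latmem _)
  have hu' := hmin' (cz ![a' 0, a 1]) (latmem _)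
  have key : Qr r₁ r₂ r₃ (cz ![a 0, a' 1] - α) + Qr r₁ r₂ r₃ (cz ![a' 0, a 1] - α)
      - Qr r₁ r₂ r₃ (cz a - α) - Qr r₁ r₂ r₃ (cz a' - α)
      = -2 * r₃ * ((a 0 : ℝ) - a' 0) * ((a 1 : ℝ) - a' 1) := by
    simp only [Qr, cz, Pi.sub_apply, Matrix.cons_val_zero, Matrix.cons_val_one,
      Matrix.head_cons]
    ring
  have hr : ((a 0 : ℝ) - a' 0) * ((a 1 : ℝ) - a' 1) ≤ 0 := by nlinarith
  have : ((a 0 - a' 0 : ℤ) : ℝ) * ((a 1 - a' 1 : ℤ) : ℝ) ≤ 0 := by push_cast; linarith [hr]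
  exact_mod_cast this

lemma exch_xs (α : Fin 2 → ℝ) (a a' : Fin 2 → ℤ)
    (ha : cz a ∈ mins r₁ r₂ r₃ α) (ha' : cz a' ∈ mins r₁ r₂ r₃ α) :
    0 ≤ (a 0 - a' 0) * ((a 0 + a 1) - (a' 0 + a' 1)) := by
  obtain ⟨-, hmin⟩ := ha
  obtain ⟨-, hmin'⟩ := ha'
  have hu := hmin (cz ![a 0, a' 0 + a' 1 - a 0]) (latmem _)
  have hu' := hmin' (cz ![a' 0, a 0 + a 1 - a' 0]) (latmem _)
  have key : Qr r₁ r₂ r₃ (cz ![a 0, a' 0 + a' 1 - a 0] - α)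
      + Qr r₁ r₂ r₃ (cz ![a' 0, a 0 + a 1 - a' 0] - α)
      - Qr r₁ r₂ r₃ (cz a - α) - Qr r₁ r₂ r₃ (cz a' - α)
      = 2 * (r₁ + r₂) * ((a 0 : ℝ) - a' 0)
          * (((a 0 : ℝ) + a 1) - ((a' 0 : ℝ) + a' 1)) := by
    simp only [Qr, cz, Pi.sub_apply, Matrix.cons_val_zero, Matrix.cons_val_one,
      Matrix.head_cons]
    push_cast
    ring
  have hr : 0 ≤ ((a 0 : ℝ) - a' 0) * (((a 0 : ℝ) + a 1) - ((a' 0 : ℝ) + a' 1)) := by nlinarith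
  have : (0:ℝ) ≤ ((a 0 - a' 0 : ℤ) : ℝ) * (((a 0 + a 1) - (a' 0 + a' 1) : ℤ) : ℝ) := by
    push_cast; linarith [hr]
  exact_mod_cast this

lemma exch_ys (α : Fin 2 → ℝ) (a a' : Fin 2 → ℤ)
    (ha : cz a ∈ mins r₁ r₂ r₃ α) (ha' : cz a' ∈ mins r₁ r₂ r₃ α) :
    0 ≤ (a 1 - a' 1) * ((a 0 + a 1) - (a' 0 + a' 1)) := by
  obtain ⟨-, hmin⟩ := ha
  obtain ⟨-, hmin'⟩ := ha'
  have hu := hmin (cz ![a' 0 + a' 1 - a 1, a 1]) (latmem _)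
  have hu' := hmin' (cz ![a 0 + a 1 - a' 1, a' 1]) (latmem _)
  have key : Qr r₁ r₂ r₃ (cz ![a' 0 + a' 1 - a 1, a 1] - α)
      + Qr r₁ r₂ r₃ (cz ![a 0 + a 1 - a' 1, a' 1] - α)
      - Qr r₁ r₂ r₃ (cz a - α) - Qr r₁ r₂ r₃ (cz a' - α)
      = 2 * r₁ * ((a 1 : ℝ) - a' 1)
          * (((a 0 : ℝ) + a 1) - ((a' 0 : ℝ) + a' 1)) := by
    simp only [Qr, cz, Pi.sub_apply, Matrix.cons_val_zero, Matrix.cons_val_one,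
      Matrix.head_cons]
    push_cast
    ring
  have hr : 0 ≤ ((a 1 : ℝ) - a' 1) * (((a 0 : ℝ) + a 1) - ((a' 0 : ℝ) + a' 1)) := by nlinarith
  have : (0:ℝ) ≤ ((a 1 - a' 1 : ℤ) : ℝ) * (((a 0 + a 1) - (a' 0 + a' 1) : ℤ) : ℝ) := by
    push_cast; linarith [hr]
  exact_mod_cast this

lemma diff_bound (α : Fin 2 → ℝ) (a a' : Fin 2 → ℤ)
    (ha : cz a ∈ mins r₁ r₂ r₃ α) (ha' : cz a' ∈ mins r₁ r₂ r₃ α) :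
    (-1 ≤ a 0 - a' 0 ∧ a 0 - a' 0 ≤ 1) ∧ (-1 ≤ a 1 - a' 1 ∧ a 1 - a' 1 ≤ 1) ∧
      (-1 ≤ (a 0 + a 1) - (a' 0 + a' 1) ∧ (a 0 + a 1) - (a' 0 + a' 1) ≤ 1) := by
  have e1 := exch_xy r₁ r₂ r₃ h₁ h₂ h₃ α a a' ha ha'
  have e2 := exch_xs r₁ r₂ r₃ h₁ h₂ h₃ α a a' ha ha'
  have e3 := exch_ys r₁ r₂ r₃ h₁ h₂ h₃ α a a' ha ha'
  have tri : a 0 - a' 0 = 0 ∨ a 1 - a' 1 = 0 ∨ (a 0 - a' 0) + (a 1 - a' 1) = 0 := by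
    rcases lt_trichotomy (a 0 - a' 0) 0 with h | h | h
    · rcases lt_trichotomy (a 1 - a' 1) 0 with h' | h' | h'
      · nlinarith
      · right; left; omega
      · right; right; nlinarith
    · left; omega
    · rcases lt_trichotomy (a 1 - a' 1) 0 with h' | h' | h'
      · right; right; nlinarith
      · right; left; omega
      · nlinarith
  have step : ∀ (e : Fin 2 → ℤ) (t : ℤ), 2 ≤ t → 0 < Qr r₁ r₂ r₃ (cz e) →
      a' = a + t • e → False := fun e t ht hQ hee =>
    no_two_step r₁ r₂ r₃ h₁ h₂ h₃ α a e t ht hQ ha (hee ▸ ha')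
  have step' : ∀ (e : Fin 2 → ℤ) (t : ℤ), 2 ≤ t → 0 < Qr r₁ r₂ r₃ (cz e) →
      a = a' + t • e → False := fun e t ht hQ hee =>
    no_two_step r₁ r₂ r₃ h₁ h₂ h₃ α a' e t ht hQ ha' (hee ▸ ha)
  have Q10 : 0 < Qr r₁ r₂ r₃ (cz ![1, 0]) := by
    simp [Qr, cz]; nlinarith
  have Q01 : 0 < Qr r₁ r₂ r₃ (cz ![0, 1]) := by
    simp [Qr, cz]; nlinarith
  have Q1m1 : 0 < Qr r₁ r₂ r₃ (cz ![1, -1]) := by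
    simp [Qr, cz]; nlinarith
  have comp : ∀ (w : Fin 2 → ℤ) (t : ℤ) (e1v e2v : ℤ) (u : Fin 2 → ℤ),
      u 0 = w 0 + t * e1v → u 1 = w 1 + t * e2v → u = w + t • ![e1v, e2v] := by
    intro w t e1v e2v u hu0 hu1
    refine zv_eq _ _ ?_ ?_
    · simp only [Pi.add_apply, Pi.smul_apply, Matrix.cons_val_zero, smul_eq_mul]
      omega
    · simp only [Pi.add_apply, Pi.smul_apply, Matrix.cons_val_one, Matrix.head_cons,
        smul_eq_mul, Matrix.cons_val_zero]
      omega
  rcases tri with h | h | h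
  · -- dx = 0, difference along (0,1)
    have hy : -1 ≤ a 1 - a' 1 ∧ a 1 - a' 1 ≤ 1 := by
      by_contra hc
      rcases (by omega : 2 ≤ a' 1 - a 1 ∨ 2 ≤ a 1 - a' 1) with hgt | hgt
      · exact step ![0,1] (a' 1 - a 1) hgt Q01
          (comp a _ _ _ a' (by omega) (by omega))
      · exact step' ![0,1] (a 1 - a' 1) hgt Q01
          (comp a' _ _ _ a (by omega) (by omega))
    exact ⟨by omega, by omega, by omega⟩
  · -- dy = 0, difference along (1,0)
    have hx : -1 ≤ a 0 - a' 0 ∧ a 0 - a' 0 ≤ 1 := by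
      by_contra hc
      rcases (by omega : 2 ≤ a' 0 - a 0 ∨ 2 ≤ a 0 - a' 0) with hgt | hgt
      · exact step ![1,0] (a' 0 - a 0) hgt Q10
          (comp a _ _ _ a' (by omega) (by omega))
      · exact step' ![1,0] (a 0 - a' 0) hgt Q10
          (comp a' _ _ _ a (by omega) (by omega))
    exact ⟨by omega, by omega, by omega⟩
  · -- dx + dy = 0, difference along (1,-1)
    have hx : -1 ≤ a 0 - a' 0 ∧ a 0 - a' 0 ≤ 1 := by
      by_contra hc
      rcases (by omega : 2 ≤ a' 0 - a 0 ∨ 2 ≤ a 0 - a' 0) with hgt | hgt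
      · exact step ![1,-1] (a' 0 - a 0) hgt Q1m1
          (comp a _ _ _ a' (by omega) (by omega))
      · exact step' ![1,-1] (a 0 - a' 0) hgt Q1m1
          (comp a' _ _ _ a (by omega) (by omega))
    exact ⟨by omega, by omega, by omega⟩


end params


def S7F : Finset (ℤ × ℤ) := {(0,0),(1,0),(-1,0),(0,1),(0,-1),(1,-1),(-1,1)}
def Tt1 : Finset (ℤ × ℤ) := {(0,0),(1,0),(0,1)}
def Tt2 : Finset (ℤ × ℤ) := {(0,0),(1,0),(1,-1)}
def Tt3 : Finset (ℤ × ℤ) := {(0,0),(0,1),(-1,1)}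
def Tt4 : Finset (ℤ × ℤ) := {(0,0),(0,-1),(-1,0)}
def Tt5 : Finset (ℤ × ℤ) := {(0,0),(0,-1),(1,-1)}
def Tt6 : Finset (ℤ × ℤ) := {(0,0),(-1,0),(-1,1)}

set_option maxRecDepth 10000 in
lemma comb : ∀ E ∈ S7F.powerset, (0,0) ∈ E →
    (∀ d ∈ E, ∀ d' ∈ E, d - d' ∈ S7F) → 3 ≤ E.card →
    E = Tt1 ∨ E = Tt2 ∨ E = Tt3 ∨ E = Tt4 ∨ E = Tt5 ∨ E = Tt6 := by decide

lemma mem_S7F_iff (x : ℤ × ℤ) :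
    x ∈ S7F ↔ |x.1| ≤ 1 ∧ |x.2| ≤ 1 ∧ |x.1 + x.2| ≤ 1 := by
  simp [S7F, Prod.ext_iff, abs_le]
  omega


lemma pair_span_ne_top (q r : Fin 2 → ℝ) {s : Set (Fin 2 → ℝ)} (hs : s ⊆ {q, r}) :
    affineSpan ℝ s ≠ ⊤ := by
  intro h
  have h1 : (⊤ : AffineSubspace ℝ (Fin 2 → ℝ)).direction = vectorSpan ℝ s := by
    rw [← h, direction_affineSpan]
  have h2 : vectorSpan ℝ s ≤ vectorSpan ℝ ({q, r} : Set (Fin 2 → ℝ)) :=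
    vectorSpan_mono ℝ hs
  rw [vectorSpan_pair] at h2
  have h3 : (⊤ : Submodule ℝ (Fin 2 → ℝ)) ≤ Submodule.span ℝ {q -ᵥ r} := by
    rw [AffineSubspace.direction_top] at h1; rw [h1]; exact h2
  have h4 : Module.finrank ℝ (Fin 2 → ℝ) ≤ 1 := by
    have h5 := Submodule.finrank_mono h3
    have h6 : Module.finrank ℝ (Submodule.span ℝ ({q -ᵥ r} : Set (Fin 2 → ℝ))) ≤ 1 := by
      simpa using finrank_span_le_card ({q -ᵥ r} : Set (Fin 2 → ℝ))
    simpa using le_trans h5 h6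
  simp [Module.finrank_pi] at h4

lemma span_top (p u w : Fin 2 → ℝ)
    (h : ∀ x : Fin 2 → ℝ, ∃ c d : ℝ, x = d • w + (c • u + p)) :
    affineSpan ℝ ({p, p + u, p + w} : Set (Fin 2 → ℝ)) = ⊤ := by
  rw [eq_top_iff]
  intro x _
  obtain ⟨c, d, hx⟩ := h x
  have hp : p ∈ affineSpan ℝ ({p, p + u, p + w} : Set (Fin 2 → ℝ)) :=
    subset_affineSpan ℝ _ (by simp)
  have hpu : p + u ∈ affineSpan ℝ ({p, p + u, p + w} : Set (Fin 2 → ℝ)) :=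
    subset_affineSpan ℝ _ (by simp)
  have hpw : p + w ∈ affineSpan ℝ ({p, p + u, p + w} : Set (Fin 2 → ℝ)) :=
    subset_affineSpan ℝ _ (by simp)
  have h1 := AffineSubspace.smul_vsub_vadd_mem _ c hpu hp hp
  have h2 := AffineSubspace.smul_vsub_vadd_mem _ d hpw hp h1
  have e1 : p + u -ᵥ p = u := by rw [vsub_eq_sub]; abel
  have e2 : p + w -ᵥ p = w := by rw [vsub_eq_sub]; abel
  rw [e1] at h1 h2
  rw [e2] at h2
  have : d • w +ᵥ (c • u +ᵥ p) = x := by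
    rw [hx]; rfl
  rwa [this] at h2

lemma trans_hull (v : Fin 2 → ℝ) (T : Set (Fin 2 → ℝ)) :
    (fun x => v + x) '' (convexHull ℝ T) = convexHull ℝ ((fun x => v + x) '' T) := by
  rw [← Set.singleton_add, ← Set.singleton_add, ← convexHull_singleton (𝕜 := ℝ) v,
    ← convexHull_add, convexHull_singleton]


lemma eq_v0' (v w : Fin 2 → ℤ) (h0 : w 0 = v 0) (h1 : w 1 = v 1) :
    cz w = cz v + 0 := by
  rw [add_zero]
  exact cz_eq w (cz v) (by rw [h0]; rfl) (by rw [h1]; rfl)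

lemma eq_vs1 (v w : Fin 2 → ℤ) (h0 : w 0 = v 0 + 1) (h1 : w 1 = v 1) :
    cz w = cz v + stdV 2 0 := by
  refine cz_eq w _ ?_ ?_
  · have : (cz v + stdV 2 0) 0 = (v 0 : ℝ) + 1 := by simp [cz, stdV]
    rw [this, h0]; push_cast; ring
  · have : (cz v + stdV 2 0) 1 = (v 1 : ℝ) := by simp [cz, stdV, Pi.single_apply]
    rw [this, h1]

lemma eq_vs2 (v w : Fin 2 → ℤ) (h0 : w 0 = v 0) (h1 : w 1 = v 1 + 1) :
    cz w = cz v + stdV 2 1 := by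
  refine cz_eq w _ ?_ ?_
  · have : (cz v + stdV 2 1) 0 = (v 0 : ℝ) := by simp [cz, stdV, Pi.single_apply]
    rw [this, h0]
  · have : (cz v + stdV 2 1) 1 = (v 1 : ℝ) + 1 := by simp [cz, stdV]
    rw [this, h1]; push_cast; ring

lemma eq_vs12 (v w : Fin 2 → ℤ) (h0 : w 0 = v 0 + 1) (h1 : w 1 = v 1 + 1) :
    cz w = cz v + (stdV 2 0 + stdV 2 1) := by
  refine cz_eq w _ ?_ ?_
  · have : (cz v + (stdV 2 0 + stdV 2 1)) 0 = (v 0 : ℝ) + 1 := by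
      simp [cz, stdV, Pi.single_apply]
    rw [this, h0]; push_cast; ring
  · have : (cz v + (stdV 2 0 + stdV 2 1)) 1 = (v 1 : ℝ) + 1 := by
      simp [cz, stdV, Pi.single_apply]
    rw [this, h1]; push_cast; ring

lemma cell_iff (r₁ r₂ r₃ : ℝ) (σ : Set (Fin 2 → ℝ)) :
    IsDelaunayCell (fun x y => x ⬝ᵥ ((r₁ • !![(1:ℝ), 0; 0, 1] + r₂ • !![(0:ℝ), 0; 0, 1]
            + r₃ • !![(1:ℝ), 1; 1, 1]).mulVec y)) σ
      ↔ ∃ α, σ = convexHull ℝ (mins r₁ r₂ r₃ α) := by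
  unfold IsDelaunayCell mins
  simp only [Bform]

lemma zTrans_hull (v : Fin 2 → ℤ) (T : Set (Fin 2 → ℝ)) :
    zTrans v (convexHull ℝ T) = convexHull ℝ ((fun x => cz v + x) '' T) := by
  have : zTrans v (convexHull ℝ T) = (fun x => cz v + x) '' (convexHull ℝ T) := rfl
  rw [this, trans_hull]

lemma span_sigma3 (v : Fin 2 → ℤ) :
    affineSpan ℝ ({cz v, cz v + stdV 2 0, cz v + stdV 2 1} : Set (Fin 2 → ℝ)) = ⊤ := by
  apply span_top
  intro x
  refine ⟨x 0 - (v 0 : ℝ), x 1 - (v 1 : ℝ), ?_⟩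
  funext i
  fin_cases i <;> simp [cz, stdV, Pi.single_apply]

lemma span_sigma4 (v : Fin 2 → ℤ) :
    affineSpan ℝ ({cz v + stdV 2 0, cz v + stdV 2 1, cz v + (stdV 2 0 + stdV 2 1)}
      : Set (Fin 2 → ℝ)) = ⊤ := by
  have h1 : cz v + stdV 2 1 = (cz v + stdV 2 0) + (stdV 2 1 - stdV 2 0) := by abel
  have h2 : cz v + (stdV 2 0 + stdV 2 1) = (cz v + stdV 2 0) + stdV 2 1 := by abel
  rw [h1, h2]
  apply span_top
  intro x
  refine ⟨(v 0 : ℝ) + 1 - x 0, x 1 - (v 1 : ℝ) - ((v 0 : ℝ) + 1 - x 0), ?_⟩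
  funext i
  fin_cases i <;> simp [cz, stdV, Pi.single_apply] <;> ring

lemma affineSpan_of_hull_subset {S : Set (Fin 2 → ℝ)} {σ : Set (Fin 2 → ℝ)}
    (h : σ = convexHull ℝ S) (htop : affineSpan ℝ S = ⊤) : affineSpan ℝ σ = ⊤ := by
  rw [h, affineSpan_convexHull, htop]

/-- For `B = r₁·[[1,0],[0,1]] + r₂·[[0,0],[0,1]] + r₃·[[1,1],[1,1]]` with
`r₁, r₂, r₃ > 0`, the 2-dimensional Delaunay cells are exactly the `ℤ²`-translates of
`σ₃ = conv{0, s₁, s₂}` and `σ₄ = conv{s₁, s₂, s₁+s₂}`. -/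
theorem delaunay_cells_V2_dim_two
    (r₁ r₂ r₃ : ℝ) (h₁ : 0 < r₁) (h₂ : 0 < r₂) (h₃ : 0 < r₃) :
    ∀ σ : Set (Fin 2 → ℝ),
      (IsDelaunayCell
        (fun x y => x ⬝ᵥ
          ((r₁ • !![(1:ℝ), 0; 0, 1] + r₂ • !![(0:ℝ), 0; 0, 1]
            + r₃ • !![(1:ℝ), 1; 1, 1]).mulVec y)) σ ∧
        affineSpan ℝ σ = ⊤) ↔
      ∃ v : Fin 2 → ℤ,
        σ = zTrans v (convexHull ℝ
              {(0 : Fin 2 → ℝ), stdV 2 0, stdV 2 1}) ∨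
        σ = zTrans v (convexHull ℝ
              {stdV 2 0, stdV 2 1, stdV 2 0 + stdV 2 1}) := by
  classical
  intro σ
  constructor
  · rintro ⟨hcell, hspan⟩
    obtain ⟨α, hσ⟩ := (cell_iff r₁ r₂ r₃ σ).1 hcell
    set S := mins r₁ r₂ r₃ α with hSdef
    have hspanS : affineSpan ℝ S = ⊤ := by
      rw [hσ, affineSpan_convexHull] at hspan; exact hspan
    -- three distinct points of S
    have hne : S.Nonempty := by
      rcases S.eq_empty_or_nonempty with h | h
      · exact absurd hspanS (by
          rw [h]; exact pair_span_ne_top 0 0 (by simp))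
      · exact h
    obtain ⟨a₀, ha₀⟩ := hne
    obtain ⟨a₁, ha₁, hne1⟩ : ∃ a₁ ∈ S, a₁ ≠ a₀ := by
      by_contra hcon
      push_neg at hcon
      exact pair_span_ne_top a₀ a₀ (fun x hx => by simp [hcon x hx]) hspanS
    obtain ⟨a₂, ha₂, hne2, hne2'⟩ : ∃ a₂ ∈ S, a₂ ≠ a₀ ∧ a₂ ≠ a₁ := by
      by_contra hcon
      push_neg at hcon
      refine pair_span_ne_top a₀ a₁ (fun x hx => ?_) hspanS
      by_cases hxa : x = a₀
      · simp [hxa]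
      · simp [hcon x hx hxa]
    obtain ⟨p₀, hp₀⟩ := ha₀.1
    obtain ⟨p₁, hp₁⟩ := ha₁.1
    obtain ⟨p₂, hp₂⟩ := ha₂.1
    have hp₀' : cz p₀ = a₀ := hp₀
    have hp₁' : cz p₁ = a₁ := hp₁
    have hp₂' : cz p₂ = a₂ := hp₂
    rw [← hp₀'] at ha₀
    rw [← hp₁'] at ha₁
    rw [← hp₂'] at ha₂
    rw [← hp₀', ← hp₁'] at hne1
    rw [← hp₀', ← hp₂'] at hne2
    rw [← hp₁', ← hp₂'] at hne2'
    -- the finset of offsets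
    let E : Finset (ℤ × ℤ) := S7F.filter (fun d => cz ![p₀ 0 + d.1, p₀ 1 + d.2] ∈ S)
    have memS7 : ∀ q q' : Fin 2 → ℤ, cz q ∈ S → cz q' ∈ S →
        (q 0 - q' 0, q 1 - q' 1) ∈ S7F := by
      intro q q' hq hq'
      have := diff_bound r₁ r₂ r₃ h₁ h₂ h₃ α q q' hq hq'
      rw [mem_S7F_iff]
      constructor
      · simp only; rw [abs_le]; omega
      constructor
      · simp only; rw [abs_le]; omega
      · simp only; rw [abs_le]; omega
    have bridge : ∀ q : Fin 2 → ℤ, cz q ∈ S → (q 0 - p₀ 0, q 1 - p₀ 1) ∈ E := by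
      intro q hq
      refine Finset.mem_filter.2 ⟨memS7 q p₀ hq ha₀, ?_⟩
      have : (![p₀ 0 + (q 0 - p₀ 0), p₀ 1 + (q 1 - p₀ 1)] : Fin 2 → ℤ) = q := by
        refine zv_eq _ _ ?_ ?_ <;> simp
      rw [this]; exact hq
    have hE0 : ((0 : ℤ), (0 : ℤ)) ∈ E := by
      have := bridge p₀ ha₀
      simpa using this
    have hEpair : ∀ d ∈ E, ∀ d' ∈ E, d - d' ∈ S7F := by
      intro d hd d' hd'
      have hq := (Finset.mem_filter.1 hd).2
      have hq' := (Finset.mem_filter.1 hd').2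
      have := memS7 _ _ hq hq'
      rw [show d - d' = (d.1 - d'.1, d.2 - d'.2) from rfl]
      simpa using this
    have hEsub : E ∈ S7F.powerset := Finset.mem_powerset.2 (Finset.filter_subset _ _)
    -- three distinct elements
    have hd1 : (p₁ 0 - p₀ 0, p₁ 1 - p₀ 1) ∈ E := bridge p₁ ha₁
    have hd2 : (p₂ 0 - p₀ 0, p₂ 1 - p₀ 1) ∈ E := bridge p₂ ha₂
    have neq_of_comp : ∀ q q' : Fin 2 → ℤ, cz q ≠ cz q' →
        (q 0 - p₀ 0, q 1 - p₀ 1) ≠ (q' 0 - p₀ 0, q' 1 - p₀ 1) := by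
      intro q q' hqq he
      rw [Prod.ext_iff] at he
      exact hqq (by
        apply congrArg cz
        refine zv_eq _ _ ?_ ?_ <;> omega)
    have hn1 : (p₁ 0 - p₀ 0, p₁ 1 - p₀ 1) ≠ ((0:ℤ), (0:ℤ)) := by
      intro he
      rw [Prod.ext_iff] at he
      exact hne1 (congrArg cz (zv_eq _ _ (by simp at he; omega) (by simp at he; omega)))
    have hn2 : (p₂ 0 - p₀ 0, p₂ 1 - p₀ 1) ≠ ((0:ℤ), (0:ℤ)) := by
      intro he
      rw [Prod.ext_iff] at he
      exact hne2 (congrArg cz (zv_eq _ _ (by simp at he; omega) (by simp at he; omega)))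
    have hn21 : (p₂ 0 - p₀ 0, p₂ 1 - p₀ 1) ≠ (p₁ 0 - p₀ 0, p₁ 1 - p₀ 1) :=
      neq_of_comp p₂ p₁ (fun h => hne2' h)
    have hcard : 3 ≤ E.card := by
      have hsub : ({((0:ℤ),(0:ℤ)), (p₁ 0 - p₀ 0, p₁ 1 - p₀ 1),
          (p₂ 0 - p₀ 0, p₂ 1 - p₀ 1)} : Finset (ℤ × ℤ)) ⊆ E := by
        intro d hd
        simp only [Finset.mem_insert, Finset.mem_singleton] at hd
        rcases hd with rfl | rfl | rfl
        · exact hE0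
        · exact hd1
        · exact hd2
      have h3 : ({((0:ℤ),(0:ℤ)), (p₁ 0 - p₀ 0, p₁ 1 - p₀ 1),
          (p₂ 0 - p₀ 0, p₂ 1 - p₀ 1)} : Finset (ℤ × ℤ)).card = 3 := by
        rw [Finset.card_insert_of_notMem (by
          simp only [Finset.mem_insert, Finset.mem_singleton]
          push_neg
          exact ⟨Ne.symm hn1, Ne.symm hn2⟩),
          Finset.card_insert_of_notMem (by
            simp only [Finset.mem_singleton]
            exact Ne.symm hn21),
          Finset.card_singleton]
      calc 3 = _ := h3.symm
        _ ≤ E.card := Finset.card_le_card hsub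
    -- characterize S pointwise
    have Sdesc : ∀ x, x ∈ S ↔ ∃ d ∈ E, x = cz ![p₀ 0 + d.1, p₀ 1 + d.2] := by
      intro x
      constructor
      · intro hx
        obtain ⟨q, hq⟩ := hx.1
        have hq' : cz q = x := hq
        refine ⟨(q 0 - p₀ 0, q 1 - p₀ 1), bridge q (by rw [hq']; exact hx), ?_⟩
        rw [← hq']
        apply congrArg cz
        refine zv_eq _ _ ?_ ?_ <;> simp
      · rintro ⟨d, hd, rfl⟩
        exact (Finset.mem_filter.1 hd).2
    have Scase : ∀ (d1 d2 d3 : ℤ × ℤ), E = {d1, d2, d3} →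
        S = {cz ![p₀ 0 + d1.1, p₀ 1 + d1.2], cz ![p₀ 0 + d2.1, p₀ 1 + d2.2],
             cz ![p₀ 0 + d3.1, p₀ 1 + d3.2]} := by
      intro d1 d2 d3 hEeq
      ext x
      rw [Sdesc, hEeq]
      simp only [Finset.mem_insert, Finset.mem_singleton, Set.mem_insert_iff,
        Set.mem_singleton_iff]
      constructor
      · rintro ⟨d, hd, rfl⟩
        rcases hd with rfl | rfl | rfl
        · left; rfl
        · right; left; rfl
        · right; right; rfl
      · rintro (rfl | rfl | rfl)
        · exact ⟨d1, by tauto, rfl⟩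
        · exact ⟨d2, by tauto, rfl⟩
        · exact ⟨d3, by tauto, rfl⟩
    have hconc : ∀ (v : Fin 2 → ℤ) (T : Set (Fin 2 → ℝ)),
        S = (fun x => cz v + x) '' T →
        σ = zTrans v (convexHull ℝ T) := by
      intro v T hST
      rw [hσ, zTrans_hull, hST]
    have img3 : ∀ v : Fin 2 → ℤ, (fun x => cz v + x) ''
        ({(0 : Fin 2 → ℝ), stdV 2 0, stdV 2 1}) =
        {cz v + 0, cz v + stdV 2 0, cz v + stdV 2 1} := by
      intro v
      rw [Set.image_insert_eq, Set.image_insert_eq, Set.image_singleton]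
    have img4 : ∀ v : Fin 2 → ℤ, (fun x => cz v + x) ''
        ({stdV 2 0, stdV 2 1, stdV 2 0 + stdV 2 1}) =
        {cz v + stdV 2 0, cz v + stdV 2 1, cz v + (stdV 2 0 + stdV 2 1)} := by
      intro v
      rw [Set.image_insert_eq, Set.image_insert_eq, Set.image_singleton]
    rcases comb E hEsub hE0 hEpair hcard with hEeq | hEeq | hEeq | hEeq | hEeq | hEeq
    · -- Tt1 = {(0,0),(1,0),(0,1)} : σ₃ with v = p₀
      refine ⟨p₀, Or.inl ?_⟩
      refine hconc p₀ _ ?_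
      rw [img3, Scase ((0:ℤ),(0:ℤ)) ((1:ℤ),(0:ℤ)) ((0:ℤ),(1:ℤ)) (by exact hEeq)]
      congr 1
      · exact eq_v0' p₀ _ (by simp) (by simp)
      congr 1
      · exact eq_vs1 p₀ _ (by simp) (by simp)
      · rw [eq_vs2 p₀ _ (by simp) (by simp)]
    · -- Tt2 = {(0,0),(1,0),(1,-1)} : σ₄ with v = p₀ + (0,-1)
      refine ⟨![p₀ 0, p₀ 1 - 1], Or.inr ?_⟩
      refine hconc _ _ ?_
      rw [img4, Scase ((0:ℤ),(0:ℤ)) ((1:ℤ),(0:ℤ)) ((1:ℤ),(-1:ℤ)) (by exact hEeq)]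
      have e1 : cz ![p₀ 0 + 0, p₀ 1 + 0] = cz ![p₀ 0, p₀ 1 - 1] + stdV 2 1 :=
        eq_vs2 _ _ (by simp) (by simp <;> ring)
      have e2 : cz ![p₀ 0 + 1, p₀ 1 + 0] = cz ![p₀ 0, p₀ 1 - 1] + (stdV 2 0 + stdV 2 1) :=
        eq_vs12 _ _ (by simp) (by simp <;> ring)
      have e3 : cz ![p₀ 0 + 1, p₀ 1 + (-1)] = cz ![p₀ 0, p₀ 1 - 1] + stdV 2 0 :=
        eq_vs1 _ _ (by simp) (by simp <;> ring)
      rw [e1, e2, e3]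
      ext x
      simp only [Set.mem_insert_iff, Set.mem_singleton_iff]
      tauto
    · -- Tt3 = {(0,0),(0,1),(-1,1)} : σ₄ with v = p₀ + (-1,0)
      refine ⟨![p₀ 0 - 1, p₀ 1], Or.inr ?_⟩
      refine hconc _ _ ?_
      rw [img4, Scase ((0:ℤ),(0:ℤ)) ((0:ℤ),(1:ℤ)) ((-1:ℤ),(1:ℤ)) (by exact hEeq)]
      have e1 : cz ![p₀ 0 + 0, p₀ 1 + 0] = cz ![p₀ 0 - 1, p₀ 1] + stdV 2 0 :=
        eq_vs1 _ _ (by simp <;> ring) (by simp)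
      have e2 : cz ![p₀ 0 + 0, p₀ 1 + 1] = cz ![p₀ 0 - 1, p₀ 1] + (stdV 2 0 + stdV 2 1) :=
        eq_vs12 _ _ (by simp <;> ring) (by simp)
      have e3 : cz ![p₀ 0 + (-1), p₀ 1 + 1] = cz ![p₀ 0 - 1, p₀ 1] + stdV 2 1 :=
        eq_vs2 _ _ (by simp <;> ring) (by simp)
      rw [e1, e2, e3]
      ext x
      simp only [Set.mem_insert_iff, Set.mem_singleton_iff]
      tauto
    · -- Tt4 = {(0,0),(0,-1),(-1,0)} : σ₄ with v = p₀ + (-1,-1)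
      refine ⟨![p₀ 0 - 1, p₀ 1 - 1], Or.inr ?_⟩
      refine hconc _ _ ?_
      rw [img4, Scase ((0:ℤ),(0:ℤ)) ((0:ℤ),(-1:ℤ)) ((-1:ℤ),(0:ℤ)) (by exact hEeq)]
      have e1 : cz ![p₀ 0 + 0, p₀ 1 + 0] = cz ![p₀ 0 - 1, p₀ 1 - 1] + (stdV 2 0 + stdV 2 1) :=
        eq_vs12 _ _ (by simp <;> ring) (by simp <;> ring)
      have e2 : cz ![p₀ 0 + 0, p₀ 1 + (-1)] = cz ![p₀ 0 - 1, p₀ 1 - 1] + stdV 2 0 :=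
        eq_vs1 _ _ (by simp <;> ring) (by simp <;> ring)
      have e3 : cz ![p₀ 0 + (-1), p₀ 1 + 0] = cz ![p₀ 0 - 1, p₀ 1 - 1] + stdV 2 1 :=
        eq_vs2 _ _ (by simp <;> ring) (by simp <;> ring)
      rw [e1, e2, e3]
      ext x
      simp only [Set.mem_insert_iff, Set.mem_singleton_iff]
      tauto
    · -- Tt5 = {(0,0),(0,-1),(1,-1)} : σ₃ with v = p₀ + (0,-1)
      refine ⟨![p₀ 0, p₀ 1 - 1], Or.inl ?_⟩
      refine hconc _ _ ?_
      rw [img3, Scase ((0:ℤ),(0:ℤ)) ((0:ℤ),(-1:ℤ)) ((1:ℤ),(-1:ℤ)) (by exact hEeq)]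
      have e1 : cz ![p₀ 0 + 0, p₀ 1 + 0] = cz ![p₀ 0, p₀ 1 - 1] + stdV 2 1 :=
        eq_vs2 _ _ (by simp) (by simp <;> ring)
      have e2 : cz ![p₀ 0 + 0, p₀ 1 + (-1)] = cz ![p₀ 0, p₀ 1 - 1] + 0 :=
        eq_v0' _ _ (by simp) (by simp <;> ring)
      have e3 : cz ![p₀ 0 + 1, p₀ 1 + (-1)] = cz ![p₀ 0, p₀ 1 - 1] + stdV 2 0 :=
        eq_vs1 _ _ (by simp) (by simp <;> ring)
      rw [e1, e2, e3]
      ext x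
      simp only [Set.mem_insert_iff, Set.mem_singleton_iff]
      tauto
    · -- Tt6 = {(0,0),(-1,0),(-1,1)} : σ₃ with v = p₀ + (-1,0)
      refine ⟨![p₀ 0 - 1, p₀ 1], Or.inl ?_⟩
      refine hconc _ _ ?_
      rw [img3, Scase ((0:ℤ),(0:ℤ)) ((-1:ℤ),(0:ℤ)) ((-1:ℤ),(1:ℤ)) (by exact hEeq)]
      have e1 : cz ![p₀ 0 + 0, p₀ 1 + 0] = cz ![p₀ 0 - 1, p₀ 1] + stdV 2 0 :=
        eq_vs1 _ _ (by simp <;> ring) (by simp)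
      have e2 : cz ![p₀ 0 + (-1), p₀ 1 + 0] = cz ![p₀ 0 - 1, p₀ 1] + 0 :=
        eq_v0' _ _ (by simp <;> ring) (by simp)
      have e3 : cz ![p₀ 0 + (-1), p₀ 1 + 1] = cz ![p₀ 0 - 1, p₀ 1] + stdV 2 1 :=
        eq_vs2 _ _ (by simp <;> ring) (by simp)
      rw [e1, e2, e3]
      ext x
      simp only [Set.mem_insert_iff, Set.mem_singleton_iff]
      tauto
  · rintro ⟨v, hv | hv⟩
    · constructor
      · refine (cell_iff r₁ r₂ r₃ σ).2 ⟨α3 r₁ r₂ r₃ v, ?_⟩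
        rw [hv, mins3 r₁ r₂ r₃ h₁ h₂ h₃ v, zTrans_hull]
        congr 1
        rw [Set.image_insert_eq, Set.image_insert_eq, Set.image_singleton, add_zero]
      · apply affineSpan_of_hull_subset (S := {cz v, cz v + stdV 2 0, cz v + stdV 2 1})
        · rw [hv, zTrans_hull, Set.image_insert_eq, Set.image_insert_eq,
            Set.image_singleton, add_zero]
        · exact span_sigma3 v
    · constructor
      · refine (cell_iff r₁ r₂ r₃ σ).2 ⟨α4 r₁ r₂ r₃ v, ?_⟩
        rw [hv, mins4 r₁ r₂ r₃ h₁ h₂ h₃ v, zTrans_hull]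
        congr 1
        rw [Set.image_insert_eq, Set.image_insert_eq, Set.image_singleton]
      · apply affineSpan_of_hull_subset
          (S := {cz v + stdV 2 0, cz v + stdV 2 1, cz v + (stdV 2 0 + stdV 2 1)})
        · rw [hv, zTrans_hull, Set.image_insert_eq, Set.image_insert_eq,
            Set.image_singleton]
        · exact span_sigma4 v
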